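/- Let n ≥ 5 be an integer, α,β,γ ∈ ℂ, and let d be a derivation of the Leibniz algebra 𝓛(α,β,γ). Then d is nilpotent as a linear operator (d^k = 0 for some k ≥ 1) if and only if the coefficient of e_1 in d(e_1) and the coefficient of e_{n−1} in d(e_{n−1}) (with respect to the basis e_1,…,e_n) are both zero. -/

import Mathlib

open scoped BigOperators

noncomputable section

/-- `stdE n i` : the `i`-th standard basis vector of `Fin n → ℂ` (1-based indexing);
zero when `i` is out of range. -/
def stdE (n : ℕ) (i : ℕ) : Fin n → ℂ := fun j => if (j : ℕ) + 1 = i then 1 else 0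

/-- The bilinear bracket on `Fin n → ℂ` determined by structure constants `c`
(1-based indices). -/
def scBr (n : ℕ) (c : ℕ → ℕ → Fin n → ℂ) (x y : Fin n → ℂ) : Fin n → ℂ :=
  ∑ i : Fin n, ∑ j : Fin n, (x i * y j) • c ((i : ℕ) + 1) ((j : ℕ) + 1)

/-- Structure constants of the Leibniz algebra `𝓛(α,β,γ)`: the only nonzero products of
basis vectors are `[e_i,e_1]=e_{i+1}` for `1 ≤ i ≤ n-3`, `[e_{n-1},e_1]=e_n+α e_2`,
`[e_1,e_{n-1}]=β e_n`, `[e_{n-1},e_{n-1}]=γ e_n`. -/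
def Lc (n : ℕ) (α β γ : ℂ) (i j : ℕ) : Fin n → ℂ :=
  (if 1 ≤ i ∧ i ≤ n - 3 ∧ j = 1 then stdE n (i + 1) else 0)
  + (if i = n - 1 ∧ j = 1 then stdE n n + α • stdE n 2 else 0)
  + (if i = 1 ∧ j = n - 1 then β • stdE n n else 0)
  + (if i = n - 1 ∧ j = n - 1 then γ • stdE n n else 0)

/-- `d` is a derivation of the bracket determined by the structure constants `c`. -/
def IsDer (n : ℕ) (c : ℕ → ℕ → Fin n → ℂ) (d : (Fin n → ℂ) →ₗ[ℂ] (Fin n → ℂ)) : Prop :=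
  ∀ x y : Fin n → ℂ, d (scBr n c x y) = scBr n c (d x) y + scBr n c x (d y)

section M
variable (n : ℕ) (α β γ : ℂ)

lemma Lc_col_zero (hn : 4 < n) (i m : ℕ) (hm1 : m ≠ 1) (hm2 : m ≠ n - 1) :
    Lc n α β γ i m = 0 := by
  unfold Lc
  rw [if_neg (by omega), if_neg (by omega), if_neg (by omega), if_neg (by omega)]
  simp

lemma Lc_one (hn : 4 < n) (i : Fin n) (p : Fin n) :
    Lc n α β γ ((i:ℕ)+1) 1 p =
      (if i = (⟨(p:ℕ)-1, by have := p.2; omega⟩ : Fin n) then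
          (if 1 ≤ (p:ℕ) ∧ (p:ℕ) ≤ n-3 then 1 else 0) else 0)
      + (if i = (⟨n-2, by omega⟩ : Fin n) then
          (if (p:ℕ)+1 = n then 1 else 0) + α * (if (p:ℕ) = 1 then 1 else 0) else 0) := by
  have hp2 := p.2
  by_cases hiN : (i:ℕ) = n-2
  · unfold Lc
    rw [if_neg (show ¬(1 ≤ (i:ℕ)+1 ∧ (i:ℕ)+1 ≤ n - 3 ∧ 1 = 1) by omega),
      if_pos (show (i:ℕ)+1 = n-1 ∧ 1 = 1 by omega),
      if_neg (show ¬((i:ℕ)+1 = 1 ∧ 1 = n-1) by omega),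
      if_neg (show ¬((i:ℕ)+1 = n-1 ∧ 1 = n-1) by omega)]
    simp only [Fin.ext_iff, Pi.add_apply, Pi.zero_apply, Pi.smul_apply, smul_eq_mul, stdE,
      zero_add, add_zero, and_true]
    split_ifs <;> first | rfl | (exfalso; omega) | ring1
  · unfold Lc
    rw [if_neg (show ¬((i:ℕ)+1 = n-1 ∧ 1 = 1) by omega),
      if_neg (show ¬((i:ℕ)+1 = 1 ∧ 1 = n-1) by omega),
      if_neg (show ¬((i:ℕ)+1 = n-1 ∧ 1 = n-1) by omega)]
    simp only [Fin.ext_iff, Pi.add_apply, Pi.zero_apply, zero_add, add_zero, and_true,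
      apply_ite (fun f : Fin n → ℂ => f p), stdE]
    split_ifs <;> first | rfl | (exfalso; omega) | ring1

lemma Lc_right (hn : 4 < n) (i : Fin n) (p : Fin n) :
    Lc n α β γ ((i:ℕ)+1) (n-1) p =
      (if i = (⟨0, by omega⟩ : Fin n) then β * (if (p:ℕ)+1 = n then 1 else 0) else 0)
      + (if i = (⟨n-2, by omega⟩ : Fin n) then γ * (if (p:ℕ)+1 = n then 1 else 0) else 0) := by
  have hp2 := p.2
  unfold Lc
  rw [if_neg (show ¬(1 ≤ (i:ℕ)+1 ∧ (i:ℕ)+1 ≤ n - 3 ∧ n-1 = 1) by omega),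
    if_neg (show ¬((i:ℕ)+1 = n-1 ∧ n-1 = 1) by omega)]
  by_cases hi0 : (i:ℕ) = 0
  · rw [if_pos (show (i:ℕ)+1 = 1 ∧ n-1 = n-1 by omega),
      if_neg (show ¬((i:ℕ)+1 = n-1 ∧ n-1 = n-1) by omega)]
    simp only [Fin.ext_iff, Pi.add_apply, Pi.zero_apply, Pi.smul_apply, smul_eq_mul, stdE,
      zero_add, add_zero, and_true]
    split_ifs <;> first | rfl | (exfalso; omega) | ring1
  · by_cases hiN : (i:ℕ) = n-2
    · rw [if_neg (show ¬((i:ℕ)+1 = 1 ∧ n-1 = n-1) by omega),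
        if_pos (show (i:ℕ)+1 = n-1 ∧ n-1 = n-1 by omega)]
      simp only [Fin.ext_iff, Pi.add_apply, Pi.zero_apply, Pi.smul_apply, smul_eq_mul, stdE,
        zero_add, add_zero, and_true]
      split_ifs <;> first | rfl | (exfalso; omega) | ring1
    · rw [if_neg (show ¬((i:ℕ)+1 = 1 ∧ n-1 = n-1) by omega),
        if_neg (show ¬((i:ℕ)+1 = n-1 ∧ n-1 = n-1) by omega)]
      simp only [Fin.ext_iff, Pi.add_apply, Pi.zero_apply, zero_add, add_zero, and_true]
      split_ifs <;> first | rfl | (exfalso; omega) | ring1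

lemma brM (hn : 4 < n) (x y : Fin n → ℂ) (p : Fin n) :
    scBr n (Lc n α β γ) x y p =
      y ⟨0, by omega⟩ *
        ((if 1 ≤ (p:ℕ) ∧ (p:ℕ) ≤ n - 3 then x ⟨(p:ℕ) - 1, by have := p.2; omega⟩ else 0)
          + (if (p:ℕ) = 1 then α * x ⟨n - 2, by omega⟩ else 0)
          + (if (p:ℕ) + 1 = n then x ⟨n - 2, by omega⟩ else 0))
      + (β * x ⟨0, by omega⟩ + γ * x ⟨n - 2, by omega⟩) * y ⟨n - 2, by omega⟩ *
          (if (p:ℕ) + 1 = n then 1 else 0) := by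
  have hI1 : ((p:ℕ) - 1) < n := by have := p.2; omega
  have h0 : (0:ℕ) < n := by omega
  have hN2 : n - 2 < n := by omega
  calc scBr n (Lc n α β γ) x y p
      = ∑ i : Fin n, ∑ j : Fin n, (x i * y j) * Lc n α β γ ((i:ℕ)+1) ((j:ℕ)+1) p := by
        simp [scBr, Finset.sum_apply]
    _ = ∑ i : Fin n, ∑ j : Fin n,
          ((if j = (⟨0, h0⟩ : Fin n) then (x i * y j) * Lc n α β γ ((i:ℕ)+1) 1 p else 0)
          + (if j = (⟨n-2, hN2⟩ : Fin n) then (x i * y j) * Lc n α β γ ((i:ℕ)+1) (n-1) p else 0)) := by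
        refine Finset.sum_congr rfl fun i _ => Finset.sum_congr rfl fun j _ => ?_
        by_cases hj0 : j = (⟨0, h0⟩ : Fin n)
        · subst hj0
          rw [if_pos rfl, if_neg (by simp [Fin.ext_iff]; omega)]
          norm_num
        · by_cases hjN : j = (⟨n-2, hN2⟩ : Fin n)
          · subst hjN
            rw [if_neg hj0, if_pos rfl]
            have : (n : ℕ) - 2 + 1 = n - 1 := by omega
            simp [this]
          · rw [if_neg hj0, if_neg hjN]
            rw [Lc_col_zero n α β γ hn _ _ (by simp [Fin.ext_iff] at hj0; omega)
              (by simp [Fin.ext_iff] at hjN; omega)]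
            simp
    _ = ∑ i : Fin n, ((x i * y ⟨0, h0⟩) * Lc n α β γ ((i:ℕ)+1) 1 p
          + (x i * y ⟨n-2, hN2⟩) * Lc n α β γ ((i:ℕ)+1) (n-1) p) := by
        refine Finset.sum_congr rfl fun i _ => ?_
        rw [Finset.sum_add_distrib, Finset.sum_ite_eq' Finset.univ, Finset.sum_ite_eq' Finset.univ]
        simp
    _ = _ := by
        rw [Finset.sum_add_distrib]
        have e1 : ∀ i : Fin n, (x i * y ⟨0, h0⟩) * Lc n α β γ ((i:ℕ)+1) 1 p
            = (if i = (⟨(p:ℕ)-1, hI1⟩ : Fin n) then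
                (x i * y ⟨0, h0⟩) * (if 1 ≤ (p:ℕ) ∧ (p:ℕ) ≤ n-3 then 1 else 0) else 0)
              + (if i = (⟨n-2, hN2⟩ : Fin n) then
                (x i * y ⟨0, h0⟩) * ((if (p:ℕ)+1 = n then 1 else 0)
                  + α * (if (p:ℕ) = 1 then 1 else 0)) else 0) := by
          intro i
          rw [Lc_one n α β γ hn i p, mul_add]
          congr 1 <;> split_ifs <;> ring
        have e2 : ∀ i : Fin n, (x i * y ⟨n-2, hN2⟩) * Lc n α β γ ((i:ℕ)+1) (n-1) p
            = (if i = (⟨0, h0⟩ : Fin n) then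
                (x i * y ⟨n-2, hN2⟩) * (β * (if (p:ℕ)+1 = n then 1 else 0)) else 0)
              + (if i = (⟨n-2, hN2⟩ : Fin n) then
                (x i * y ⟨n-2, hN2⟩) * (γ * (if (p:ℕ)+1 = n then 1 else 0)) else 0) := by
          intro i
          rw [Lc_right n α β γ hn i p, mul_add]
          congr 1 <;> split_ifs <;> ring
        rw [Finset.sum_congr rfl fun i _ => e1 i, Finset.sum_congr rfl fun i _ => e2 i,
          Finset.sum_add_distrib, Finset.sum_add_distrib,
          Finset.sum_ite_eq' Finset.univ, Finset.sum_ite_eq' Finset.univ,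
          Finset.sum_ite_eq' Finset.univ, Finset.sum_ite_eq' Finset.univ]
        simp only [Finset.mem_univ, if_true]
        split_ifs <;> ring

-- x-side basis specializations
lemma br_E1_y (hn : 4 < n) (y : Fin n → ℂ) (p : Fin n) :
    scBr n (Lc n α β γ) (stdE n 1) y p =
      y ⟨0, by omega⟩ * (if (p:ℕ) = 1 then 1 else 0)
      + β * y ⟨n-2, by omega⟩ * (if (p:ℕ)+1 = n then 1 else 0) := by
  have hp2 := p.2
  rw [brM n α β γ hn]
  simp only [stdE]
  split_ifs <;> first | rfl | (exfalso; omega) | ring1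

lemma br_Ek_y (hn : 4 < n) (k : ℕ) (hk : 2 ≤ k) (hk2 : k ≤ n-2) (y : Fin n → ℂ) (p : Fin n) :
    scBr n (Lc n α β γ) (stdE n k) y p =
      y ⟨0, by omega⟩ * (if (p:ℕ) = k ∧ k ≤ n-3 then 1 else 0) := by
  have hp2 := p.2
  rw [brM n α β γ hn]
  simp only [stdE]
  split_ifs <;> first | rfl | (exfalso; omega) | ring1

lemma br_En1_y (hn : 4 < n) (y : Fin n → ℂ) (p : Fin n) :
    scBr n (Lc n α β γ) (stdE n (n-1)) y p =
      y ⟨0, by omega⟩ * ((if (p:ℕ) = 1 then α else 0) + (if (p:ℕ)+1 = n then 1 else 0))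
      + γ * y ⟨n-2, by omega⟩ * (if (p:ℕ)+1 = n then 1 else 0) := by
  have hp2 := p.2
  rw [brM n α β γ hn]
  simp only [stdE]
  split_ifs <;> first | rfl | (exfalso; omega) | ring1

lemma br_En_y (hn : 4 < n) (y : Fin n → ℂ) (p : Fin n) :
    scBr n (Lc n α β γ) (stdE n n) y p = 0 := by
  have hp2 := p.2
  rw [brM n α β γ hn]
  simp only [stdE]
  split_ifs <;> first | rfl | (exfalso; omega) | ring1

-- y-side basis specializations
lemma br_x_one (hn : 4 < n) (x : Fin n → ℂ) (p : Fin n) :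
    scBr n (Lc n α β γ) x (stdE n 1) p =
      (if 1 ≤ (p:ℕ) ∧ (p:ℕ) ≤ n - 3 then x ⟨(p:ℕ) - 1, by have := p.2; omega⟩ else 0)
      + (if (p:ℕ) = 1 then α * x ⟨n - 2, by omega⟩ else 0)
      + (if (p:ℕ) + 1 = n then x ⟨n - 2, by omega⟩ else 0) := by
  have hp2 := p.2
  rw [brM n α β γ hn]
  simp only [stdE]
  split_ifs <;> first | rfl | (exfalso; omega) | ring1

lemma br_x_n1 (hn : 4 < n) (x : Fin n → ℂ) (p : Fin n) :
    scBr n (Lc n α β γ) x (stdE n (n-1)) p =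
      (β * x ⟨0, by omega⟩ + γ * x ⟨n - 2, by omega⟩) * (if (p:ℕ) + 1 = n then 1 else 0) := by
  have hp2 := p.2
  rw [brM n α β γ hn]
  simp only [stdE]
  split_ifs <;> first | rfl | (exfalso; omega) | ring1

lemma br_x_Em (hn : 4 < n) (x : Fin n → ℂ) (m : ℕ) (hm1 : m ≠ 1) (hm2 : m ≠ n-1) (p : Fin n) :
    scBr n (Lc n α β γ) x (stdE n m) p = 0 := by
  have hp2 := p.2
  rw [brM n α β γ hn]
  simp only [stdE]
  split_ifs <;> first | rfl | (exfalso; omega) | ring1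

lemma br_Ek_E1 (hn : 4 < n) (k : ℕ) (hk : 1 ≤ k) (hk2 : k ≤ n-3) :
    scBr n (Lc n α β γ) (stdE n k) (stdE n 1) = stdE n (k+1) := by
  funext p
  have hp2 := p.2
  rw [br_x_one n α β γ hn]
  simp only [stdE]
  split_ifs <;> first | rfl | (exfalso; omega) | ring1

lemma br_En1_E1 (hn : 4 < n) :
    scBr n (Lc n α β γ) (stdE n (n-1)) (stdE n 1) = stdE n n + α • stdE n 2 := by
  funext p
  have hp2 := p.2
  rw [br_x_one n α β γ hn]
  simp only [stdE, Pi.add_apply, Pi.smul_apply, smul_eq_mul]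
  split_ifs <;> first | rfl | (exfalso; omega) | ring1

lemma br_En1_En1 (hn : 4 < n) :
    scBr n (Lc n α β γ) (stdE n (n-1)) (stdE n (n-1)) = γ • stdE n n := by
  funext p
  have hp2 := p.2
  rw [br_x_n1 n α β γ hn]
  simp only [stdE, Pi.smul_apply, smul_eq_mul]
  split_ifs <;> first | rfl | (exfalso; omega) | ring1

lemma br_E2_En1 (hn : 4 < n) :
    scBr n (Lc n α β γ) (stdE n 2) (stdE n (n-1)) = 0 := by
  funext p
  have hp2 := p.2
  rw [br_x_n1 n α β γ hn]
  simp only [stdE, Pi.zero_apply]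
  split_ifs <;> first | rfl | (exfalso; omega) | ring1

lemma DX (hn : 4 < n) (d : (Fin n → ℂ) →ₗ[ℂ] (Fin n → ℂ)) (x : Fin n → ℂ) (p : Fin n) :
    d x p = ∑ j : Fin n, x j * d (stdE n ((j:ℕ)+1)) p := by
  have hx : x = ∑ j : Fin n, x j • stdE n ((j:ℕ)+1) := by
    funext q
    rw [Finset.sum_apply]
    have e : ∀ j : Fin n, (x j • stdE n ((j:ℕ)+1)) q = if j = q then x j else 0 := by
      intro j
      simp only [stdE, Pi.smul_apply, smul_eq_mul, mul_ite, mul_one, mul_zero, Fin.ext_iff]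
      split_ifs <;> first | rfl | (exfalso; omega)
    rw [Finset.sum_congr rfl fun j _ => e j, Finset.sum_ite_eq' Finset.univ]
    simp
  conv_lhs => rw [hx]
  rw [map_sum, Finset.sum_apply]
  refine Finset.sum_congr rfl fun j _ => ?_
  rw [map_smul]
  simp

lemma REC (hn : 4 < n) (d : (Fin n → ℂ) →ₗ[ℂ] (Fin n → ℂ)) (hd : IsDer n (Lc n α β γ) d)
    (k : ℕ) (hk : 1 ≤ k) (hk2 : k ≤ n-3) (p : Fin n) :
    d (stdE n (k+1)) p =
      (if 1 ≤ (p:ℕ) ∧ (p:ℕ) ≤ n-3 then d (stdE n k) ⟨(p:ℕ)-1, by have := p.2; omega⟩ else 0)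
      + (if (p:ℕ) = 1 then α * d (stdE n k) ⟨n-2, by omega⟩ else 0)
      + (if (p:ℕ)+1 = n then d (stdE n k) ⟨n-2, by omega⟩ else 0)
      + d (stdE n 1) ⟨0, by omega⟩ * (if (p:ℕ) = k then 1 else 0)
      + (if k = 1 ∧ (p:ℕ)+1 = n then β * d (stdE n 1) ⟨n-2, by omega⟩ else 0) := by
  have H := congrFun (hd (stdE n k) (stdE n 1)) p
  rw [br_Ek_E1 n α β γ hn k hk hk2] at H
  rw [Pi.add_apply, br_x_one n α β γ hn] at H
  rcases Nat.eq_or_lt_of_le hk with h1 | h2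
  · rw [← h1] at H ⊢
    rw [br_E1_y n α β γ hn] at H
    rw [H]
    split_ifs <;> first | rfl | (exfalso; omega) | ring1
  · rw [br_Ek_y n α β γ hn k h2 (by omega)] at H
    rw [H]
    split_ifs <;> first | rfl | (exfalso; omega) | ring1

section Facts
variable (n : ℕ) (α β γ : ℂ) (d : (Fin n → ℂ) →ₗ[ℂ] (Fin n → ℂ))

/-- `b₁ = 0` : the `e₁`-coefficient of `d e_{n-1}` vanishes. -/
lemma fact_b1 (hn : 4 < n) (hd : IsDer n (Lc n α β γ) d) :
    d (stdE n (n-1)) ⟨0, by omega⟩ = 0 := by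
  set p : Fin n := ⟨2, by omega⟩ with hp
  have hpv : (p:ℕ) = 2 := rfl
  have H := congrFun (hd (stdE n 2) (stdE n (n-1))) p
  rw [br_E2_En1 n α β γ hn, map_zero, Pi.add_apply,
    br_x_n1 n α β γ hn, br_Ek_y n α β γ hn 2 (by omega) (by omega)] at H
  rw [if_neg (show ¬((p:ℕ)+1 = n) by omega),
    if_pos (show (p:ℕ) = 2 ∧ 2 ≤ n-3 by omega)] at H
  simp only [Pi.zero_apply, mul_zero, mul_one, zero_add] at H
  exact H.symm

/-- rows `e_{n-1}` vanish on columns `e_2 … e_{n-2}`. -/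
lemma fact_rowN1_cols (hn : 4 < n) (hd : IsDer n (Lc n α β γ) d)
    (k : ℕ) (hk : 2 ≤ k) (hk2 : k ≤ n-2) :
    d (stdE n k) ⟨n-2, by omega⟩ = 0 := by
  obtain ⟨k', rfl⟩ : ∃ k', k = k'+1 := ⟨k-1, by omega⟩
  set p : Fin n := ⟨n-2, by omega⟩ with hp
  have hpv : (p:ℕ) = n-2 := rfl
  have H := REC n α β γ hn d hd k' (by omega) (by omega) p
  rw [if_neg (show ¬(1 ≤ (p:ℕ) ∧ (p:ℕ) ≤ n-3) by omega),
    if_neg (show ¬((p:ℕ) = 1) by omega),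
    if_neg (show ¬((p:ℕ)+1 = n) by omega),
    if_neg (show ¬((p:ℕ) = k') by omega),
    if_neg (show ¬(k' = 1 ∧ (p:ℕ)+1 = n) by omega)] at H
  simpa using H

/-- row `e_1` vanishes on columns other than `e_1`, `e_{n-1}`. -/
lemma fact_row1_cols (hn : 4 < n) (hd : IsDer n (Lc n α β γ) d)
    (m : ℕ) (hm : 2 ≤ m) (hm2 : m ≠ n-1) :
    d (stdE n m) ⟨0, by omega⟩ = 0 := by
  set p : Fin n := ⟨1, by omega⟩ with hp
  have hpv : (p:ℕ) = 1 := rfl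
  have hbr : scBr n (Lc n α β γ) (stdE n 1) (stdE n m) = 0 := by
    funext q; rw [br_x_Em n α β γ hn _ m (by omega) hm2]; rfl
  have H := congrFun (hd (stdE n 1) (stdE n m)) p
  rw [hbr, map_zero, Pi.add_apply,
    br_x_Em n α β γ hn _ m (by omega) hm2, br_E1_y n α β γ hn] at H
  rw [if_pos (show (p:ℕ) = 1 from rfl), if_neg (show ¬((p:ℕ)+1 = n) by omega)] at H
  simp only [Pi.zero_apply, mul_one, mul_zero, add_zero, zero_add] at H
  exact H.symm

/-- the column `e_n` relation `R(d e_n) = 0`. -/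
lemma fact_EN (hn : 4 < n) (hd : IsDer n (Lc n α β γ) d) (p : Fin n) :
    (if 1 ≤ (p:ℕ) ∧ (p:ℕ) ≤ n-3 then d (stdE n n) ⟨(p:ℕ)-1, by have := p.2; omega⟩ else 0)
      + (if (p:ℕ) = 1 then α * d (stdE n n) ⟨n-2, by omega⟩ else 0)
      + (if (p:ℕ)+1 = n then d (stdE n n) ⟨n-2, by omega⟩ else 0) = 0 := by
  have hbr : scBr n (Lc n α β γ) (stdE n n) (stdE n 1) = 0 := by
    funext q; rw [br_En_y n α β γ hn]; rfl
  have H := congrFun (hd (stdE n n) (stdE n 1)) p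
  rw [hbr, map_zero, Pi.add_apply, br_x_one n α β γ hn, br_En_y n α β γ hn, add_zero] at H
  simp only [Pi.zero_apply] at H
  exact H.symm

lemma fact_EN_n2 (hn : 4 < n) (hd : IsDer n (Lc n α β γ) d) :
    d (stdE n n) ⟨n-2, by omega⟩ = 0 := by
  set p : Fin n := ⟨n-1, by omega⟩ with hp
  have hpv : (p:ℕ) = n-1 := rfl
  have H := fact_EN n α β γ d hn hd p
  rw [if_neg (show ¬(1 ≤ (p:ℕ) ∧ (p:ℕ) ≤ n-3) by omega),
    if_neg (show ¬((p:ℕ) = 1) by omega),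
    if_pos (show (p:ℕ)+1 = n by omega)] at H
  simpa using H

lemma fact_EN_low (hn : 4 < n) (hd : IsDer n (Lc n α β γ) d)
    (q : Fin n) (hq : (q:ℕ) ≤ n-4) : d (stdE n n) q = 0 := by
  set p : Fin n := ⟨(q:ℕ)+1, by omega⟩ with hp
  have hpv : (p:ℕ) = (q:ℕ)+1 := rfl
  have H := fact_EN n α β γ d hn hd p
  rw [if_pos (show 1 ≤ (p:ℕ) ∧ (p:ℕ) ≤ n-3 by omega),
    if_neg (show ¬((p:ℕ)+1 = n) by omega)] at H
  rw [fact_EN_n2 n α β γ d hn hd, mul_zero, ite_self, add_zero, add_zero] at H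
  have hq' : (⟨(p:ℕ)-1, by have := p.2; omega⟩ : Fin n) = q := by
    apply Fin.ext; simp [hpv]
  rw [hq'] at H
  exact H

/-- coordinates of `d e₂` via the recursion. -/
lemma dE2_at (hn : 4 < n) (hd : IsDer n (Lc n α β γ) d) (p : Fin n) :
    d (stdE n 2) p =
      (if 1 ≤ (p:ℕ) ∧ (p:ℕ) ≤ n-3 then d (stdE n 1) ⟨(p:ℕ)-1, by have := p.2; omega⟩ else 0)
      + (if (p:ℕ) = 1 then α * d (stdE n 1) ⟨n-2, by omega⟩ else 0)
      + (if (p:ℕ)+1 = n then d (stdE n 1) ⟨n-2, by omega⟩ else 0)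
      + d (stdE n 1) ⟨0, by omega⟩ * (if (p:ℕ) = 1 then 1 else 0)
      + (if (p:ℕ)+1 = n then β * d (stdE n 1) ⟨n-2, by omega⟩ else 0) := by
  have H := REC n α β γ hn d hd 1 (by omega) (by omega) p
  simp only [show (1:ℕ)+1 = 2 from rfl, eq_self_iff_true, true_and] at H
  exact H

/-- The pair `(e_{n-1}, e_1)` relation, evaluated at a coordinate. -/
lemma pairN1 (hn : 4 < n) (hd : IsDer n (Lc n α β γ) d) (p : Fin n) :
    d (stdE n n) p + α * d (stdE n 2) p =
      ((if 1 ≤ (p:ℕ) ∧ (p:ℕ) ≤ n-3 then d (stdE n (n-1)) ⟨(p:ℕ)-1, by have := p.2; omega⟩ else 0)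
        + (if (p:ℕ) = 1 then α * d (stdE n (n-1)) ⟨n-2, by omega⟩ else 0)
        + (if (p:ℕ)+1 = n then d (stdE n (n-1)) ⟨n-2, by omega⟩ else 0))
      + (d (stdE n 1) ⟨0, by omega⟩ *
          ((if (p:ℕ) = 1 then α else 0) + (if (p:ℕ)+1 = n then 1 else 0))
        + γ * d (stdE n 1) ⟨n-2, by omega⟩ * (if (p:ℕ)+1 = n then 1 else 0)) := by
  have H := congrFun (hd (stdE n (n-1)) (stdE n 1)) p
  rw [br_En1_E1 n α β γ hn, map_add, map_smul, Pi.add_apply, Pi.add_apply, Pi.smul_apply,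
    smul_eq_mul, br_x_one n α β γ hn, br_En1_y n α β γ hn] at H
  exact H

lemma fact_alpha (hn : 4 < n) (hd : IsDer n (Lc n α β γ) d)
    (ha : d (stdE n 1) ⟨0, by omega⟩ = 0) (hb : d (stdE n (n-1)) ⟨n-2, by omega⟩ = 0) :
    α * d (stdE n 1) ⟨n-2, by omega⟩ = 0 := by
  set p : Fin n := ⟨1, by omega⟩ with hp
  have hpv : (p:ℕ) = 1 := rfl
  have H := pairN1 n α β γ d hn hd p
  have e0 : (⟨(p:ℕ)-1, by have := p.2; omega⟩ : Fin n) = (⟨0, by omega⟩ : Fin n) := by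
    apply Fin.ext; simp [hpv]
  have h2 := dE2_at n α β γ d hn hd p
  rw [fact_EN_low n α β γ d hn hd p (by omega), h2] at H
  simp only [hpv] at H
  norm_num [show ¬((1:ℕ)+1 = n) by omega, show (1:ℕ) ≤ n-3 by omega,
    fact_b1 n α β γ d hn hd, ha, hb] at H
  rcases H with h | h
  · rw [h, zero_mul]
  · rw [h, mul_zero]

lemma fact_dEn_last (hn : 4 < n) (hd : IsDer n (Lc n α β γ) d)
    (ha : d (stdE n 1) ⟨0, by omega⟩ = 0) (hb : d (stdE n (n-1)) ⟨n-2, by omega⟩ = 0) :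
    d (stdE n n) ⟨n-1, by omega⟩ = γ * d (stdE n 1) ⟨n-2, by omega⟩ := by
  set p : Fin n := ⟨n-1, by omega⟩ with hp
  have hpv : (p:ℕ) = n-1 := rfl
  have H := pairN1 n α β γ d hn hd p
  have h2 := dE2_at n α β γ d hn hd p
  rw [h2, ha, hb] at H
  simp only [hpv, show ((n:ℕ)-1+1 = n) = True from by simp; omega,
    show ((n:ℕ)-1 = 1) = False from by simp; omega,
    show ((1:ℕ) ≤ n-1 ∧ n-1 ≤ n-3) = False from by simp; omega,
    if_true, if_false, eq_self_iff_true, mul_zero, mul_one, zero_mul, add_zero, zero_add] at H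
  have hα := fact_alpha n α β γ d hn hd ha hb
  have expand : d (stdE n n) p
      = γ * d (stdE n 1) ⟨n-2, by omega⟩
        - α * (d (stdE n 1) ⟨n-2, by omega⟩ + β * d (stdE n 1) ⟨n-2, by omega⟩) := by
    rw [← H]; ring
  rw [expand]
  linear_combination (-1 - β) * hα

lemma fact_gamma (hn : 4 < n) (hd : IsDer n (Lc n α β γ) d)
    (ha : d (stdE n 1) ⟨0, by omega⟩ = 0) (hb : d (stdE n (n-1)) ⟨n-2, by omega⟩ = 0) :
    γ * d (stdE n 1) ⟨n-2, by omega⟩ = 0 := by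
  set p : Fin n := ⟨n-1, by omega⟩ with hp
  have hpv : (p:ℕ) = n-1 := rfl
  have H := congrFun (hd (stdE n (n-1)) (stdE n (n-1))) p
  rw [br_En1_En1 n α β γ hn, map_smul, Pi.smul_apply, smul_eq_mul, Pi.add_apply,
    br_x_n1 n α β γ hn, br_En1_y n α β γ hn, fact_b1 n α β γ d hn hd, hb] at H
  rw [fact_dEn_last n α β γ d hn hd ha hb] at H
  have H2 : γ * (γ * d (stdE n 1) ⟨n-2, by omega⟩) = 0 := by
    rw [H]; ring
  rcases mul_eq_zero.mp H2 with h | h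
  · rw [h, zero_mul]
  · exact h

lemma fact_dEn_last0 (hn : 4 < n) (hd : IsDer n (Lc n α β γ) d)
    (ha : d (stdE n 1) ⟨0, by omega⟩ = 0) (hb : d (stdE n (n-1)) ⟨n-2, by omega⟩ = 0) :
    d (stdE n n) ⟨n-1, by omega⟩ = 0 := by
  rw [fact_dEn_last n α β γ d hn hd ha hb, fact_gamma n α β γ d hn hd ha hb]
end Facts

section Facts2
variable (n : ℕ) (α β γ : ℂ) (d : (Fin n → ℂ) →ₗ[ℂ] (Fin n → ℂ))

lemma SUP (hn : 4 < n) (hd : IsDer n (Lc n α β γ) d)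
    (ha : d (stdE n 1) ⟨0, by omega⟩ = 0) (hb : d (stdE n (n-1)) ⟨n-2, by omega⟩ = 0) :
    ∀ k, 2 ≤ k → k ≤ n-2 → ∀ p : Fin n, ((p:ℕ) = 0 ∨ (p:ℕ) = n-2 ∨ (p:ℕ)+1 ≤ k) →
      d (stdE n k) p = 0 := by
  have hα := fact_alpha n α β γ d hn hd ha hb
  intro k hk
  induction k, hk using Nat.le_induction with
  | base =>
    intro _ p hp
    have hp2 := p.2
    rw [dE2_at n α β γ d hn hd p]
    by_cases h0 : (p:ℕ) = 0
    · rw [if_neg (show ¬(1 ≤ (p:ℕ) ∧ (p:ℕ) ≤ n-3) by omega),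
        if_neg (show ¬((p:ℕ) = 1) by omega),
        if_neg (show ¬((p:ℕ)+1 = n) by omega),
        if_neg (show ¬((p:ℕ)+1 = n) by omega), ha]
      simp
    · by_cases h1 : (p:ℕ) = 1
      · simp only [h1]
        norm_num [show (1:ℕ) ≤ n-3 by omega, show ¬((1:ℕ)+1 = n) by omega, ha, hα]
      · have hpn2 : (p:ℕ) = n-2 := by omega
        rw [if_neg (show ¬(1 ≤ (p:ℕ) ∧ (p:ℕ) ≤ n-3) by omega),
          if_neg (show ¬((p:ℕ) = 1) by omega),
          if_neg (show ¬((p:ℕ)+1 = n) by omega),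
          if_neg (show ¬((p:ℕ)+1 = n) by omega), ha]
        simp
  | succ k hk ih =>
    intro hk1 p hp
    have hp2 := p.2
    have hrec := REC n α β γ hn d hd k (by omega) (by omega) p
    have ihn2 : d (stdE n k) ⟨n-2, by omega⟩ = 0 :=
      ih (by omega) ⟨n-2, by omega⟩ (by right; left; rfl)
    rw [hrec, ihn2, ha, if_neg (show ¬(k = 1 ∧ (p:ℕ)+1 = n) by omega)]
    rcases (show (p:ℕ) = 0 ∨ (p:ℕ) = n-2 ∨ (1 ≤ (p:ℕ) ∧ (p:ℕ) ≤ k) from by omega)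
      with h0 | h0 | h0
    · rw [if_neg (show ¬(1 ≤ (p:ℕ) ∧ (p:ℕ) ≤ n-3) by omega)]
      simp
    · rw [if_neg (show ¬(1 ≤ (p:ℕ) ∧ (p:ℕ) ≤ n-3) by omega)]
      simp
    · have ihv : d (stdE n k) ⟨(p:ℕ)-1, by have := p.2; omega⟩ = 0 :=
        ih (by omega) ⟨(p:ℕ)-1, by have := p.2; omega⟩
          (by right; right; show (p:ℕ)-1+1 ≤ k; omega)
      rw [if_pos (show 1 ≤ (p:ℕ) ∧ (p:ℕ) ≤ n-3 by omega), ihv]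
      simp

lemma fact_DN2 (hn : 4 < n) (hd : IsDer n (Lc n α β γ) d)
    (ha : d (stdE n 1) ⟨0, by omega⟩ = 0) (hb : d (stdE n (n-1)) ⟨n-2, by omega⟩ = 0) :
    d (stdE n (n-2)) = 0 := by
  funext p
  have hp2 := p.2
  have hrec := REC n α β γ hn d hd (n-3) (by omega) (by omega) p
  rw [show n-3+1 = n-2 by omega] at hrec
  have hSn2 : d (stdE n (n-3)) ⟨n-2, by omega⟩ = 0 :=
    SUP n α β γ d hn hd ha hb (n-3) (by omega) (by omega) ⟨n-2, by omega⟩ (by right; left; rfl)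
  rw [hrec, ha, hSn2, if_neg (show ¬(n-3 = 1 ∧ (p:ℕ)+1 = n) by omega)]
  by_cases hc : 1 ≤ (p:ℕ) ∧ (p:ℕ) ≤ n-3
  · have hv : d (stdE n (n-3)) ⟨(p:ℕ)-1, by have := p.2; omega⟩ = 0 := by
      rcases (show (p:ℕ)-1 = 0 ∨ ((p:ℕ)-1)+1 ≤ n-3 from by omega) with h | h
      · exact SUP n α β γ d hn hd ha hb (n-3) (by omega) (by omega) _ (by left; exact h)
      · exact SUP n α β γ d hn hd ha hb (n-3) (by omega) (by omega) _ (by right; right; exact h)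
    rw [if_pos hc, hv]
    simp
  · rw [if_neg hc]
    simp
end Facts2

def wt (n : ℕ) (p : Fin n) : ℕ :=
  if (p:ℕ) = 0 then 0 else if (p:ℕ) = n-2 then 1 else if (p:ℕ) = n-3 then n-1
  else if (p:ℕ) = n-1 then n-2 else (p:ℕ)+1

section Facts3
variable (n : ℕ) (α β γ : ℂ) (d : (Fin n → ℂ) →ₗ[ℂ] (Fin n → ℂ))

lemma INC (hn : 4 < n) (hd : IsDer n (Lc n α β γ) d)
    (ha : d (stdE n 1) ⟨0, by omega⟩ = 0) (hb : d (stdE n (n-1)) ⟨n-2, by omega⟩ = 0)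
    (j p : Fin n) (hw : wt n p ≤ wt n j) : d (stdE n ((j:ℕ)+1)) p = 0 := by
  have hp2 := p.2
  have hj2 := j.2
  by_cases hj0 : (j:ℕ) = 0
  · have hwj : wt n j = 0 := by unfold wt; rw [if_pos hj0]
    have hp0 : (p:ℕ) = 0 := by
      by_contra hc
      have h1 : 1 ≤ wt n p := by unfold wt; split_ifs <;> omega
      omega
    rw [show (j:ℕ)+1 = 1 by omega, show p = (⟨0, by omega⟩ : Fin n) from Fin.ext hp0]
    exact ha
  · by_cases hjn2 : (j:ℕ) = n-2
    · have hwj : wt n j = 1 := by unfold wt; rw [if_neg hj0, if_pos hjn2]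
      have hp01 : (p:ℕ) = 0 ∨ (p:ℕ) = n-2 := by
        by_contra hc
        push_neg at hc
        have h1 : 2 ≤ wt n p := by unfold wt; split_ifs <;> omega
        omega
      rw [show (j:ℕ)+1 = n-1 by omega]
      rcases hp01 with h | h
      · rw [show p = (⟨0, by omega⟩ : Fin n) from Fin.ext h]
        exact fact_b1 n α β γ d hn hd
      · rw [show p = (⟨n-2, by omega⟩ : Fin n) from Fin.ext h]
        exact hb
    · by_cases hjn3 : (j:ℕ) = n-3
      · rw [show (j:ℕ)+1 = n-2 by omega, fact_DN2 n α β γ d hn hd ha hb]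
        rfl
      · by_cases hjn1 : (j:ℕ) = n-1
        · have hwj : wt n j = n-2 := by
            unfold wt; rw [if_neg hj0, if_neg hjn2, if_neg hjn3, if_pos hjn1]
          have hpn3 : (p:ℕ) ≠ n-3 := by
            intro hc
            have : wt n p = n-1 := by
              unfold wt; rw [if_neg (by omega), if_neg (by omega), if_pos hc]
            omega
          rw [show (j:ℕ)+1 = n by omega]
          rcases (show (p:ℕ) ≤ n-4 ∨ (p:ℕ) = n-2 ∨ (p:ℕ) = n-1 from by omega) with h | h | h
          · exact fact_EN_low n α β γ d hn hd p h
          · rw [show p = (⟨n-2, by omega⟩ : Fin n) from Fin.ext h]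
            exact fact_EN_n2 n α β γ d hn hd
          · rw [show p = (⟨n-1, by omega⟩ : Fin n) from Fin.ext h]
            exact fact_dEn_last0 n α β γ d hn hd ha hb
        · have hj14 : 1 ≤ (j:ℕ) ∧ (j:ℕ) ≤ n-4 := by omega
          have hwj : wt n j = (j:ℕ)+1 := by
            unfold wt; rw [if_neg hj0, if_neg hjn2, if_neg hjn3, if_neg hjn1]
          apply SUP n α β γ d hn hd ha hb ((j:ℕ)+1) (by omega) (by omega) p
          by_cases hp0 : (p:ℕ) = 0
          · left; exact hp0
          · by_cases hpn2 : (p:ℕ) = n-2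
            · right; left; exact hpn2
            · right; right
              by_cases hpn3 : (p:ℕ) = n-3
              · exfalso
                have : wt n p = n-1 := by
                  unfold wt; rw [if_neg hp0, if_neg hpn2, if_pos hpn3]
                omega
              · by_cases hpn1 : (p:ℕ) = n-1
                · exfalso
                  have : wt n p = n-2 := by
                    unfold wt; rw [if_neg hp0, if_neg hpn2, if_neg hpn3, if_pos hpn1]
                  omega
                · have : wt n p = (p:ℕ)+1 := by
                    unfold wt; rw [if_neg hp0, if_neg hpn2, if_neg hpn3, if_neg hpn1]
                  omega

lemma backward (hn : 4 < n) (hd : IsDer n (Lc n α β γ) d)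
    (ha : d (stdE n 1) ⟨0, by omega⟩ = 0) (hb : d (stdE n (n-1)) ⟨n-2, by omega⟩ = 0) :
    d ^ n = 0 := by
  have key : ∀ m : ℕ, ∀ x : Fin n → ℂ, (∀ j : Fin n, wt n j < m → x j = 0) →
      ∀ p : Fin n, wt n p < m + 1 → d x p = 0 := by
    intro m x hx p hp
    rw [DX n hn d x p]
    refine Finset.sum_eq_zero fun j _ => ?_
    by_cases hj : wt n j < m
    · rw [hx j hj, zero_mul]
    · rw [INC n α β γ d hn hd ha hb j p (by omega), mul_zero]
  have main : ∀ m : ℕ, ∀ x : Fin n → ℂ, ∀ p : Fin n, wt n p < m → ((d ^ m) x) p = 0 := by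
    intro m
    induction m with
    | zero => intro x p hp; omega
    | succ m ih =>
      intro x p hp
      have hps : (d ^ (m+1)) x = d ((d ^ m) x) := by
        rw [pow_succ']; rfl
      rw [hps]
      exact key m ((d ^ m) x) (fun j hj => ih x j hj) p hp
  apply LinearMap.ext
  intro x
  funext p
  have hwp : wt n p < n := by
    have := p.2; unfold wt; split_ifs <;> omega
  simpa using main n x p hwp
end Facts3

section Facts4
variable (n : ℕ) (α β γ : ℂ) (d : (Fin n → ℂ) →ₗ[ℂ] (Fin n → ℂ))

lemma ROW1 (hn : 4 < n) (hd : IsDer n (Lc n α β γ) d) (x : Fin n → ℂ) :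
    d x ⟨0, by omega⟩ = d (stdE n 1) ⟨0, by omega⟩ * x ⟨0, by omega⟩ := by
  rw [DX n hn d x ⟨0, by omega⟩]
  rw [Finset.sum_eq_single (⟨0, by omega⟩ : Fin n)]
  · rw [show ((⟨0, by omega⟩ : Fin n) : ℕ) + 1 = 1 from rfl]
    ring
  · intro j _ hj
    have hj0 : (j:ℕ) ≠ 0 := fun hc => hj (Fin.ext hc)
    by_cases hjn2 : (j:ℕ) = n-2
    · rw [show (j:ℕ)+1 = n-1 by omega, fact_b1 n α β γ d hn hd, mul_zero]
    · rw [fact_row1_cols n α β γ d hn hd ((j:ℕ)+1) (by omega) (by omega), mul_zero]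
  · intro h
    exact absurd (Finset.mem_univ _) h

lemma ROWN1 (hn : 4 < n) (hd : IsDer n (Lc n α β γ) d) (x : Fin n → ℂ) :
    d x ⟨n-2, by omega⟩ = d (stdE n 1) ⟨n-2, by omega⟩ * x ⟨0, by omega⟩
      + d (stdE n (n-1)) ⟨n-2, by omega⟩ * x ⟨n-2, by omega⟩ := by
  rw [DX n hn d x ⟨n-2, by omega⟩]
  have e : ∀ j : Fin n, x j * d (stdE n ((j:ℕ)+1)) ⟨n-2, by omega⟩
      = (if j = (⟨0, by omega⟩ : Fin n) then d (stdE n 1) ⟨n-2, by omega⟩ * x j else 0)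
        + (if j = (⟨n-2, by omega⟩ : Fin n) then
            d (stdE n (n-1)) ⟨n-2, by omega⟩ * x j else 0) := by
    intro j
    have hj2 := j.2
    by_cases hj0 : j = (⟨0, by omega⟩ : Fin n)
    · rw [if_pos hj0, if_neg (by rw [hj0]; intro hc; have := congrArg Fin.val hc; simp at this; omega)]
      rw [hj0, show ((⟨0, by omega⟩ : Fin n) : ℕ) + 1 = 1 from rfl, add_zero]
      ring
    · by_cases hjn2 : j = (⟨n-2, by omega⟩ : Fin n)
      · rw [if_neg hj0, if_pos hjn2, hjn2]
        rw [show ((⟨n-2, by omega⟩ : Fin n) : ℕ) + 1 = n-1 by simp; omega, zero_add]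
        ring
      · rw [if_neg hj0, if_neg hjn2]
        have hj0' : (j:ℕ) ≠ 0 := fun hc => hj0 (Fin.ext hc)
        have hjn2' : (j:ℕ) ≠ n-2 := fun hc => hjn2 (Fin.ext hc)
        by_cases hjn1 : (j:ℕ) = n-1
        · rw [show (j:ℕ)+1 = n by omega, fact_EN_n2 n α β γ d hn hd, mul_zero, add_zero]
        · rw [fact_rowN1_cols n α β γ d hn hd ((j:ℕ)+1) (by omega) (by omega), mul_zero, add_zero]
  rw [Finset.sum_congr rfl fun j _ => e j, Finset.sum_add_distrib,
    Finset.sum_ite_eq' Finset.univ, Finset.sum_ite_eq' Finset.univ]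
  simp

lemma forwardA (hn : 4 < n) (hd : IsDer n (Lc n α β γ) d) (k : ℕ) :
    ((d ^ k) (stdE n 1)) ⟨0, by omega⟩ = (d (stdE n 1) ⟨0, by omega⟩)^k := by
  induction k with
  | zero =>
    rw [pow_zero, pow_zero]
    show stdE n 1 ⟨0, by omega⟩ = 1
    simp [stdE]
  | succ k ih =>
    have hps : (d ^ (k+1)) (stdE n 1) = d ((d ^ k) (stdE n 1)) := by rw [pow_succ']; rfl
    rw [hps, ROW1 n α β γ d hn hd, ih, pow_succ]
    ring

lemma forwardB (hn : 4 < n) (hd : IsDer n (Lc n α β γ) d) (k : ℕ) :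
    ((d ^ k) (stdE n (n-1))) ⟨0, by omega⟩ = 0 ∧
    ((d ^ k) (stdE n (n-1))) ⟨n-2, by omega⟩ = (d (stdE n (n-1)) ⟨n-2, by omega⟩)^k := by
  induction k with
  | zero =>
    rw [pow_zero, pow_zero]
    constructor
    · show stdE n (n-1) ⟨0, by omega⟩ = 0
      simp only [stdE]
      rw [if_neg (by omega)]
    · show stdE n (n-1) ⟨n-2, by omega⟩ = 1
      simp only [stdE]
      rw [if_pos (by omega)]
  | succ k ih =>
    have hps : (d ^ (k+1)) (stdE n (n-1)) = d ((d ^ k) (stdE n (n-1))) := by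
      rw [pow_succ']; rfl
    constructor
    · rw [hps, ROW1 n α β γ d hn hd, ih.1, mul_zero]
    · rw [hps, ROWN1 n α β γ d hn hd, ih.1, ih.2, mul_zero, zero_add, pow_succ]
      ring
end Facts4

theorem nilpotent_derivation_iff_L (n : ℕ) (hn : 5 ≤ n) (α β γ : ℂ)
    (d : (Fin n → ℂ) →ₗ[ℂ] (Fin n → ℂ)) (hd : IsDer n (Lc n α β γ) d) :
    (∃ k : ℕ, 1 ≤ k ∧ d ^ k = 0) ↔
      (d (stdE n 1) (⟨0, by omega⟩ : Fin n) = 0 ∧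
       d (stdE n (n - 1)) (⟨n - 2, by omega⟩ : Fin n) = 0) := by
  constructor
  · rintro ⟨k, hk1, hk0⟩
    constructor
    · have h1 := forwardA n α β γ d hn hd k
      rw [hk0] at h1
      simp only [LinearMap.zero_apply, Pi.zero_apply] at h1
      exact pow_eq_zero_iff (by omega) |>.mp h1.symm
    · have h2 := (forwardB n α β γ d hn hd k).2
      rw [hk0] at h2
      simp only [LinearMap.zero_apply, Pi.zero_apply] at h2
      exact pow_eq_zero_iff (by omega) |>.mp h2.symm
  · rintro ⟨ha, hb⟩
    exact ⟨n, by omega, backward n α β γ d hn hd ha hb⟩
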